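/- Let a_1, …, a_n be real numbers with a_1 + ⋯ + a_n = 0. Then ∑_{j=1}^{n} |a_j| ≥ √2 · (a_1² + ⋯ + a_n²)^{1/2}. -/
import Mathlib

open Finset

theorem stmt_1 (n : ℕ) (a : Fin n → ℝ) (hsum : ∑ j, a j = 0) :
    ∑ j, |a j| ≥ Real.sqrt 2 * Real.sqrt (∑ j, (a j) ^ 2) := by
  set S := ∑ j, |a j| with hS
  have hS0 : 0 ≤ S := Finset.sum_nonneg fun j _ => abs_nonneg _
  have key : ∀ j : Fin n, 2 * |a j| ≤ S := by
    intro j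
    have h1 : a j + ∑ k ∈ univ.erase j, a k = 0 := by
      rw [Finset.add_sum_erase univ a (mem_univ j)]; exact hsum
    have h2 : |a j| = |∑ k ∈ univ.erase j, a k| := by
      have : a j = -(∑ k ∈ univ.erase j, a k) := by linarith
      rw [this, abs_neg]
    have h3 : |∑ k ∈ univ.erase j, a k| ≤ ∑ k ∈ univ.erase j, |a k| :=
      Finset.abs_sum_le_sum_abs _ _
    have h4 : |a j| + ∑ k ∈ univ.erase j, |a k| = S := by
      rw [hS, Finset.add_sum_erase univ (fun k => |a k|) (mem_univ j)]
    linarith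
  have hsq : ∑ j, (a j) ^ 2 ≤ S ^ 2 / 2 := by
    have : ∀ j : Fin n, (a j) ^ 2 ≤ |a j| * (S / 2) := by
      intro j
      nlinarith [sq_abs (a j), key j, abs_nonneg (a j)]
    calc ∑ j, (a j) ^ 2 ≤ ∑ j, |a j| * (S / 2) := Finset.sum_le_sum fun j _ => this j
      _ = S * (S / 2) := by rw [← Finset.sum_mul]
      _ = S ^ 2 / 2 := by ring
  calc Real.sqrt 2 * Real.sqrt (∑ j, (a j) ^ 2)
      ≤ Real.sqrt 2 * Real.sqrt (S ^ 2 / 2) := mul_le_mul_of_nonneg_left (Real.sqrt_le_sqrt hsq) (Real.sqrt_nonneg 2)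
    _ = Real.sqrt (2 * (S ^ 2 / 2)) := (Real.sqrt_mul (by norm_num) _).symm
    _ = Real.sqrt (S ^ 2) := by ring_nf
    _ = S := by rw [Real.sqrt_sq hS0]
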